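/- Let p(x,τ) = Σ_{j=0}^N A_j(τ)·λ_j·e^{−λ_j x} with distinct rates λ_j > 0 and Σ_j A_j(τ) = 1. If p satisfies ∂p/∂τ = −p + 2∫₀^∞ p(y)p(x+y) dy for all x ≥ 0, then the coefficients satisfy dA_k/dτ = A_k·Σ_{j=0}^N A_j·(λ_j − λ_k)/(λ_j + λ_k). -/

import Mathlib

open MeasureTheory

private lemma integral_exp_neg_mul' {b : ℝ} (hb : 0 < b) :
    (∫ y in Set.Ioi (0 : ℝ), Real.exp (-(b * y))) = 1 / b := by
  have h := integral_comp_mul_left_Ioi (fun x => Real.exp (-x)) 0 hb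
  simp only [mul_zero, integral_exp_neg_Ioi, neg_zero, Real.exp_zero, smul_eq_mul, mul_one] at h
  rw [h]
  rw [one_div]

private lemma exp_indep {ι : Type*} [DecidableEq ι] (lam : ι → ℝ) :
    ∀ (s : Finset ι), Set.InjOn lam s → ∀ (c : ι → ℝ),
      (∀ x : ℝ, 0 ≤ x → ∑ k ∈ s, c k * Real.exp (-(lam k * x)) = 0) →
      ∀ k ∈ s, c k = 0 := by
  intro s
  induction s using Finset.strongInduction with
  | _ s ih =>
    intro hinj c hzero k hk
    have hne : s.Nonempty := ⟨k, hk⟩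
    obtain ⟨k₀, hk₀, hmin⟩ := s.exists_min_image lam hne
    -- the function h x := ∑ c k exp(-((lam k - lam k₀) x))
    set h : ℝ → ℝ := fun x => ∑ j ∈ s, c j * Real.exp (-((lam j - lam k₀) * x)) with hh
    have hzero' : ∀ x : ℝ, 0 ≤ x → h x = 0 := by
      intro x hx
      have : h x = Real.exp (lam k₀ * x) * ∑ j ∈ s, c j * Real.exp (-(lam j * x)) := by
        rw [Finset.mul_sum]
        refine Finset.sum_congr rfl fun j _ => ?_
        rw [show Real.exp (lam k₀ * x) * (c j * Real.exp (-(lam j * x)))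
            = c j * (Real.exp (lam k₀ * x) * Real.exp (-(lam j * x))) by ring,
          ← Real.exp_add]
        congr 2
        ring
      rw [this, hzero x hx, mul_zero]
    have hlim : Filter.Tendsto h Filter.atTop (nhds (c k₀)) := by
      have : Filter.Tendsto h Filter.atTop
          (nhds (∑ j ∈ s, if j = k₀ then c j else 0)) := by
        apply tendsto_finset_sum
        intro j hj
        by_cases hj0 : j = k₀
        · subst hj0
          simp only [if_pos rfl, sub_self, zero_mul, neg_zero, Real.exp_zero, mul_one]
          exact tendsto_const_nhds
        · simp only [if_neg hj0]
          have ha : 0 < lam j - lam k₀ := by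
            have := hmin j hj
            rcases lt_or_eq_of_le this with h' | h'
            · linarith
            · exact absurd (hinj hj hk₀ h'.symm) hj0
          have h1 : Filter.Tendsto (fun x : ℝ => Real.exp (-((lam j - lam k₀) * x)))
              Filter.atTop (nhds 0) := by
            apply Real.tendsto_exp_neg_atTop_nhds_zero.comp
            exact Filter.Tendsto.const_mul_atTop ha Filter.tendsto_id
          have := h1.const_mul (c j)
          simpa using this
      simpa [Finset.sum_ite_eq' s k₀ c, hk₀] using this
    have hlim0 : Filter.Tendsto h Filter.atTop (nhds 0) := by
      apply Filter.Tendsto.congr' _ tendsto_const_nhds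
      filter_upwards [Filter.eventually_ge_atTop (0 : ℝ)] with x hx
      exact (hzero' x hx).symm
    have hck₀ : c k₀ = 0 := tendsto_nhds_unique hlim hlim0
    -- now reduce to s.erase k₀
    by_cases hkk : k = k₀
    · rw [hkk]; exact hck₀
    · refine ih (s.erase k₀) (Finset.erase_ssubset hk₀) (hinj.mono ?_) c ?_ k
        (Finset.mem_erase.mpr ⟨hkk, hk⟩)
      · intro x hx; exact Finset.mem_of_mem_erase hx
      · intro x hx
        have := hzero x hx
        rw [← Finset.add_sum_erase s _ hk₀] at this
        rw [hck₀, zero_mul, zero_add] at this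
        exact this

/-- If `p (x, τ) = Σ_j A_j τ * λ_j * exp (-λ_j x)` (distinct positive rates, coefficients
summing to `1`) satisfies the master equation
`∂p/∂τ = -p + 2 ∫₀^∞ p(y) p(x+y) dy` for all `x ≥ 0`, then the coefficients satisfy
`A_k' = A_k * Σ_j A_j (λ_j - λ_k)/(λ_j + λ_k)`. -/
theorem coefficients_evolution (N : ℕ) (lam : Fin (N + 1) → ℝ)
    (hpos : ∀ j, 0 < lam j) (hmono : StrictMono lam)
    (A : Fin (N + 1) → ℝ → ℝ)
    (hdiff : ∀ k, Differentiable ℝ (A k))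
    (hsum : ∀ τ, ∑ j, A j τ = 1)
    (p : ℝ → ℝ → ℝ)
    (hp : ∀ x τ, p x τ = ∑ j, A j τ * lam j * Real.exp (-(lam j * x)))
    (hmaster : ∀ x ≥ (0 : ℝ), ∀ τ : ℝ,
      HasDerivAt (fun τ => p x τ)
        (-(p x τ) + 2 * ∫ y in Set.Ioi (0 : ℝ), p y τ * p (x + y) τ) τ) :
    ∀ k, ∀ τ : ℝ,
      HasDerivAt (A k)
        (A k τ * ∑ j, A j τ * (lam j - lam k) / (lam j + lam k)) τ := by
  intro k τ
  set D : Fin (N + 1) → ℝ := fun j => deriv (A j) τ with hD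
  have hDA : ∀ j, HasDerivAt (A j) (D j) τ := fun j => (hdiff j τ).hasDerivAt
  -- derivative of p x in τ computed from the sum expression
  have hd1 : ∀ x : ℝ, HasDerivAt (fun τ => p x τ)
      (∑ j, D j * lam j * Real.exp (-(lam j * x))) τ := by
    intro x
    have heq : (fun τ => p x τ)
        = fun τ => ∑ j, A j τ * (lam j * Real.exp (-(lam j * x))) := by
      funext τ'
      rw [hp x τ']
      exact Finset.sum_congr rfl fun j _ => by ring
    rw [heq]
    have := HasDerivAt.sum (u := Finset.univ)
      (A := fun j τ => A j τ * (lam j * Real.exp (-(lam j * x))))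
      (A' := fun j => D j * (lam j * Real.exp (-(lam j * x))))
      (fun j _ => (hDA j).mul_const _)
    rw [Finset.sum_fn] at this
    refine this.congr_deriv ?_
    exact Finset.sum_congr rfl fun j _ => by ring
  -- compute the collision integral
  have hint : ∀ x : ℝ,
      (∫ y in Set.Ioi (0 : ℝ), p y τ * p (x + y) τ)
        = ∑ i, ∑ j, A i τ * lam i * (A j τ * lam j) * Real.exp (-(lam j * x))
            * (1 / (lam i + lam j)) := by
    intro x
    have hpt : ∀ y : ℝ, p y τ * p (x + y) τ
        = ∑ i, ∑ j, (A i τ * lam i * (A j τ * lam j) * Real.exp (-(lam j * x)))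
            * Real.exp (-((lam i + lam j) * y)) := by
      intro y
      rw [hp y τ, hp (x + y) τ, Finset.sum_mul_sum]
      refine Finset.sum_congr rfl fun i _ => Finset.sum_congr rfl fun j _ => ?_
      rw [show Real.exp (-(lam j * (x + y)))
          = Real.exp (-(lam j * x)) * Real.exp (-(lam j * y)) by
            rw [← Real.exp_add]; congr 1; ring,
        show Real.exp (-((lam i + lam j) * y))
          = Real.exp (-(lam i * y)) * Real.exp (-(lam j * y)) by
            rw [← Real.exp_add]; congr 1; ring]
      ring
    have hintg : ∀ i j : Fin (N + 1), IntegrableOn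
        (fun y => (A i τ * lam i * (A j τ * lam j) * Real.exp (-(lam j * x)))
          * Real.exp (-((lam i + lam j) * y))) (Set.Ioi (0 : ℝ)) := by
      intro i j
      have := (exp_neg_integrableOn_Ioi 0 (add_pos (hpos i) (hpos j))).const_mul
        (A i τ * lam i * (A j τ * lam j) * Real.exp (-(lam j * x)))
      simp only [neg_mul] at this
      exact this
    calc (∫ y in Set.Ioi (0 : ℝ), p y τ * p (x + y) τ)
        = ∫ y in Set.Ioi (0 : ℝ), ∑ i, ∑ j,
            (A i τ * lam i * (A j τ * lam j) * Real.exp (-(lam j * x)))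
            * Real.exp (-((lam i + lam j) * y)) := by
          exact integral_congr_ae (Filter.Eventually.of_forall fun y => hpt y)
      _ = ∑ i, ∑ j, A i τ * lam i * (A j τ * lam j) * Real.exp (-(lam j * x))
            * (1 / (lam i + lam j)) := by
          rw [integral_finset_sum _ (fun i _ => integrable_finset_sum _ (fun j _ => hintg i j))]
          refine Finset.sum_congr rfl fun i _ => ?_
          rw [integral_finset_sum _ (fun j _ => hintg i j)]
          refine Finset.sum_congr rfl fun j _ => ?_
          rw [MeasureTheory.integral_const_mul, integral_exp_neg_mul' (add_pos (hpos i) (hpos j))]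
  -- the pointwise identity
  have key : ∀ x : ℝ, 0 ≤ x →
      ∑ j, D j * lam j * Real.exp (-(lam j * x))
        = -(p x τ) + 2 * ∫ y in Set.Ioi (0 : ℝ), p y τ * p (x + y) τ :=
    fun x hx => (hd1 x).unique (hmaster x hx τ)
  -- coefficient vector
  set c : Fin (N + 1) → ℝ := fun j => D j * lam j + A j τ * lam j
      - 2 * ∑ i, A i τ * lam i * (A j τ * lam j) * (1 / (lam i + lam j)) with hc
  have hczero : ∀ x : ℝ, 0 ≤ x → ∑ j, c j * Real.exp (-(lam j * x)) = 0 := by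
    intro x hx
    have h1 := key x hx
    rw [hint x, hp x τ] at h1
    have h2 : (2 : ℝ) * ∑ i, ∑ j, A i τ * lam i * (A j τ * lam j)
          * Real.exp (-(lam j * x)) * (1 / (lam i + lam j))
        = ∑ j, (2 * ∑ i, A i τ * lam i * (A j τ * lam j) * (1 / (lam i + lam j)))
            * Real.exp (-(lam j * x)) := by
      rw [Finset.sum_comm, Finset.mul_sum]
      refine Finset.sum_congr rfl fun j _ => ?_
      simp only [Finset.mul_sum, Finset.sum_mul]
      exact Finset.sum_congr rfl fun i _ => by ring
    rw [h2] at h1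
    have h3 : ∑ j, c j * Real.exp (-(lam j * x))
        = (∑ j, D j * lam j * Real.exp (-(lam j * x)))
          + (∑ j, A j τ * lam j * Real.exp (-(lam j * x)))
          - ∑ j, (2 * ∑ i, A i τ * lam i * (A j τ * lam j) * (1 / (lam i + lam j)))
              * Real.exp (-(lam j * x)) := by
      rw [← Finset.sum_add_distrib, ← Finset.sum_sub_distrib]
      exact Finset.sum_congr rfl fun j _ => by simp only [hc]; ring
    rw [h3, h1]
    ring
  have hcz : ∀ j, c j = 0 := by
    intro j
    exact exp_indep lam Finset.univ (hmono.injective.injOn) c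
      (fun x hx => hczero x hx) j (Finset.mem_univ j)
  -- solve for D k
  have hlk : lam k ≠ 0 := (hpos k).ne'
  have hDk : D k = A k τ * ∑ j, A j τ * (lam j - lam k) / (lam j + lam k) := by
    have h0 : D k * lam k + A k τ * lam k
        - 2 * ∑ i, A i τ * lam i * (A k τ * lam k) * (1 / (lam i + lam k)) = 0 := hcz k
    have hs := hsum τ
    have hR : (A k τ * ∑ j, A j τ * (lam j - lam k) / (lam j + lam k)) * lam k
        = 2 * (∑ i, A i τ * lam i * (A k τ * lam k) * (1 / (lam i + lam k)))
          - A k τ * lam k := by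
      calc (A k τ * ∑ j, A j τ * (lam j - lam k) / (lam j + lam k)) * lam k
          = ∑ j, (A k τ * (A j τ * (lam j - lam k) / (lam j + lam k))) * lam k := by
            rw [Finset.mul_sum, Finset.sum_mul]
        _ = ∑ j, (2 * (A j τ * lam j * (A k τ * lam k) * (1 / (lam j + lam k)))
              - A k τ * lam k * A j τ) := by
            refine Finset.sum_congr rfl fun j _ => ?_
            have hjk : lam j + lam k ≠ 0 := (add_pos (hpos j) (hpos k)).ne'
            field_simp
            ring
        _ = 2 * (∑ i, A i τ * lam i * (A k τ * lam k) * (1 / (lam i + lam k)))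
              - A k τ * lam k * ∑ j, A j τ := by
            rw [Finset.sum_sub_distrib, Finset.mul_sum, Finset.mul_sum]
        _ = 2 * (∑ i, A i τ * lam i * (A k τ * lam k) * (1 / (lam i + lam k)))
              - A k τ * lam k := by rw [hs, mul_one]
    have hDlam : D k * lam k
        = (A k τ * ∑ j, A j τ * (lam j - lam k) / (lam j + lam k)) * lam k := by
      rw [hR]; linarith [h0]
    exact mul_right_cancel₀ hlk hDlam
  have := hDA k
  rwa [hDk] at this
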